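/- Let a and u be positive integers with gcd(u, a) = 1, let z and w be nonzero complex numbers with w^u = z, and let G, H be polynomials over ℂ such that H is coprime to 1 - z·X^a in ℂ[X] and H(X^u) (the composition of H with X^u) is coprime to 1 - w·X^a in ℂ[X]. Suppose A and B are polynomials over ℂ with deg A < a and deg B < a satisfying A·H ≡ G (mod the ideal generated by 1 - z·X^a) and B·H(X^u) ≡ G(X^u) (mod the ideal generated by 1 - w·X^a). Then A(0) = B(0). -/

import Mathlib

open Polynomial

lemma sum_eval_roots_aux (a : ℕ) (ha : 0 < a) {ζ : ℂ} (hζ : IsPrimitiveRoot ζ a)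
    (r : ℂ) (P : Polynomial ℂ) (hP : P.degree < a) :
    ∑ i ∈ Finset.range a, P.eval (r * ζ ^ i) = (a : ℂ) * P.eval 0 := by
  have hnd : P.natDegree < a := by
    rcases eq_or_ne P 0 with rfl | h
    · simpa using ha
    · exact (Polynomial.natDegree_lt_iff_degree_lt h).2 (by exact_mod_cast hP)
  have heval : ∀ x : ℂ, P.eval x = ∑ k ∈ Finset.range a, P.coeff k * x ^ k :=
    fun x => Polynomial.eval_eq_sum_range' hnd x
  simp_rw [heval]
  rw [Finset.sum_comm]
  have key : ∀ k ∈ Finset.range a,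
      (∑ i ∈ Finset.range a, P.coeff k * (r * ζ ^ i) ^ k)
        = if k = 0 then (a : ℂ) * P.coeff 0 else 0 := by
    intro k hk
    rw [Finset.mem_range] at hk
    rcases eq_or_ne k 0 with rfl | hk0
    · simp [mul_comm]
    · have hne : ζ ^ k ≠ 1 := hζ.pow_ne_one_of_pos_of_lt hk0 hk
      have hsum : ∑ i ∈ Finset.range a, (ζ ^ k) ^ i = 0 := by
        rw [geom_sum_eq hne]
        have : (ζ ^ k) ^ a = 1 := by
          rw [← pow_mul, mul_comm, pow_mul, hζ.pow_eq_one, one_pow]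
        simp [this]
      have : ∀ i : ℕ, P.coeff k * (r * ζ ^ i) ^ k = P.coeff k * r ^ k * (ζ ^ k) ^ i := by
        intro i
        rw [mul_pow, ← pow_mul, mul_comm i k, pow_mul, mul_assoc]
      simp_rw [this]
      rw [← Finset.mul_sum, hsum, mul_zero, if_neg hk0]
  rw [Finset.sum_congr rfl key, Finset.sum_ite_eq' (Finset.range a) 0
    (fun _ => (a : ℂ) * P.coeff 0), if_pos (Finset.mem_range.2 ha)]
  rw [← heval 0, Polynomial.coeff_zero_eq_eval_zero]

/-- the key transformation / multiplier identity. If `gcd(u, a) = 1`,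
`w ^ u = z`, `A` is the (degree `< a`) representative of `G / H` modulo `1 - z X ^ a`, and
`B` is the (degree `< a`) representative of `G(X^u) / H(X^u)` modulo `1 - w X ^ a`, then
`A(0) = B(0)`. -/
theorem key_transformation (a u : ℕ) (ha : 0 < a) (hu : 0 < u)
    (hcop : Nat.Coprime u a) (z w : ℂ) (hz : z ≠ 0) (hw : w ≠ 0) (hwu : w ^ u = z)
    (G H A B : Polynomial ℂ)
    (hH : IsCoprime H (1 - C z * X ^ a))
    (hHu : IsCoprime (H.comp (X ^ u)) (1 - C w * X ^ a))
    (hAdeg : A.degree < a) (hBdeg : B.degree < a)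
    (hA : A * H - G ∈ Ideal.span {1 - C z * X ^ a})
    (hB : B * H.comp (X ^ u) - G.comp (X ^ u) ∈ Ideal.span {1 - C w * X ^ a}) :
    A.eval 0 = B.eval 0 := by
  obtain ⟨ζ, hζ⟩ : ∃ ζ : ℂ, IsPrimitiveRoot ζ a :=
    ⟨_, Complex.isPrimitiveRoot_exp a ha.ne'⟩
  obtain ⟨s, hs⟩ : ∃ s : ℂ, s ^ a = w⁻¹ := IsAlgClosed.exists_pow_nat_eq w⁻¹ ha
  obtain ⟨cA, hcA⟩ : (1 - C z * X ^ a) ∣ (A * H - G) := Ideal.mem_span_singleton.1 hA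
  obtain ⟨cB, hcB⟩ : (1 - C w * X ^ a) ∣ (B * H.comp (X ^ u) - G.comp (X ^ u)) :=
    Ideal.mem_span_singleton.1 hB
  obtain ⟨p, q, hpq⟩ := hH
  obtain ⟨p', q', hpq'⟩ := hHu
  -- facts at points x with x^a = z⁻¹
  have evalz : ∀ x : ℂ, x ^ a = z⁻¹ →
      A.eval x * H.eval x = G.eval x ∧ H.eval x ≠ 0 := by
    intro x hx
    have h0 : Polynomial.eval x (1 - C z * X ^ a) = 0 := by
      simp [hx, mul_inv_cancel₀ hz]
    constructor
    · have h1 := congrArg (Polynomial.eval x) hcA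
      rw [Polynomial.eval_mul, h0, zero_mul, Polynomial.eval_sub, Polynomial.eval_mul,
        sub_eq_zero] at h1
      exact h1
    · intro hH0
      have h1 := congrArg (Polynomial.eval x) hpq
      rw [Polynomial.eval_add, Polynomial.eval_mul, Polynomial.eval_mul, h0, mul_zero,
        hH0, mul_zero, zero_add, Polynomial.eval_one] at h1
      exact zero_ne_one h1
  -- facts at points y with y^a = w⁻¹
  have evalw : ∀ y : ℂ, y ^ a = w⁻¹ →
      B.eval y * H.eval (y ^ u) = G.eval (y ^ u) ∧ H.eval (y ^ u) ≠ 0 := by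
    intro y hy
    have h0 : Polynomial.eval y (1 - C w * X ^ a) = 0 := by
      simp [hy, mul_inv_cancel₀ hw]
    constructor
    · have h1 := congrArg (Polynomial.eval y) hcB
      rw [Polynomial.eval_mul, h0, zero_mul, Polynomial.eval_sub, Polynomial.eval_mul,
        sub_eq_zero, Polynomial.eval_comp, Polynomial.eval_comp, Polynomial.eval_pow,
        Polynomial.eval_X] at h1
      exact h1
    · intro hH0
      have h1 := congrArg (Polynomial.eval y) hpq'
      rw [Polynomial.eval_add, Polynomial.eval_mul, Polynomial.eval_mul, h0, mul_zero,
        Polynomial.eval_comp, Polynomial.eval_pow, Polynomial.eval_X, hH0, mul_zero,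
        zero_add, Polynomial.eval_one] at h1
      exact zero_ne_one h1
  -- pointwise identification
  have hpoint : ∀ j : ℕ, B.eval (s * ζ ^ j) = A.eval (s ^ u * (ζ ^ u) ^ j) := by
    intro j
    set y : ℂ := s * ζ ^ j with hydef
    have hya : y ^ a = w⁻¹ := by
      rw [hydef, mul_pow, ← pow_mul, mul_comm j a, pow_mul, hζ.pow_eq_one, one_pow, mul_one, hs]
    have hxy : y ^ u = s ^ u * (ζ ^ u) ^ j := by
      rw [hydef, mul_pow, ← pow_mul, ← pow_mul, mul_comm j u]
    have hxa : (y ^ u) ^ a = z⁻¹ := by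
      rw [← pow_mul, mul_comm u a, pow_mul, hya, inv_pow, hwu]
    obtain ⟨hB1, hBne⟩ := evalw y hya
    obtain ⟨hA1, _⟩ := evalz (y ^ u) hxa
    rw [← hxy]
    exact mul_right_cancel₀ hBne (hB1.trans hA1.symm)
  have hζu : IsPrimitiveRoot (ζ ^ u) a := hζ.pow_of_coprime u hcop
  have hsumB := sum_eval_roots_aux a ha hζ s B hBdeg
  have hsumA := sum_eval_roots_aux a ha hζu (s ^ u) A hAdeg
  have hac : (a : ℂ) ≠ 0 := Nat.cast_ne_zero.2 ha.ne'
  apply mul_left_cancel₀ hac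
  rw [← hsumA, ← hsumB]
  exact (Finset.sum_congr rfl fun j _ => hpoint j).symm
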